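/- arXiv:2203.14439 — 3 statements merged into one kernel-verified Lean document; each statement's English description precedes it below -/
import Mathlib

section
/- Let $R$ be a commutative $\mathbb{Q}$-algebra, $l \mid n$, and $x, a \in R$. For $1 \leq k \leq n$ define $c^{l,a}_k = \sigma_k(x_1 - a/l, \ldots, x_n - a/l)$ where $x_1,\ldots,x_n \in R$. Setting $b = a + x$, the classes satisfy the change-of-trivialization formula $c^{l,b}_k = \sum_{i=0}^{k} (-1/l)^i \binom{n-k+i}{i} x^i \, c^{l,a}_{k-i}$. -/
open Polynomial Multiset

lemma esymm_shift {R : Type*} [CommRing R] (s : Multiset R) (n : ℕ)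
    (hs : Multiset.card s = n) (t : R) (k : ℕ) (hk : k ≤ n) :
    (s.map (fun y => y - t)).esymm k
      = ∑ i ∈ Finset.range (k + 1),
          (-t) ^ i * ((n - k + i).choose i : R) * s.esymm (k - i) := by
  have hcard : Multiset.card (s.map (fun y => y - t)) = n := by simp [hs]
  have key := Multiset.prod_X_add_C_coeff (s.map (fun y => y - t))
    (k := n - k) (by omega)
  rw [hcard, Nat.sub_sub_self hk] at key
  rw [← key, Multiset.map_map]
  have heq : ((s.map (fun y => X + C (y - t))).prod : R[X])
      = ((s.map (fun y => X + C y)).prod).comp (X - C t) := by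
    rw [Polynomial.multiset_prod_comp, Multiset.map_map]
    congr 1
    apply Multiset.map_congr rfl
    intro y _
    simp only [Function.comp_apply, add_comp, X_comp, C_comp, C_sub]
    ring
  show ((s.map (fun y => X + C (y - t))).prod).coeff (n - k) = _
  rw [heq, Multiset.prod_X_add_C_eq_sum_esymm, hs, Polynomial.sum_comp,
    Polynomial.finset_sum_coeff]
  simp only [mul_comp, C_comp, X_pow_comp, coeff_C_mul, sub_eq_add_neg (X : R[X]),
    ← C_neg, coeff_X_add_C_pow]
  rw [show n + 1 = (k + 1) + (n - k) by omega, Finset.sum_range_add]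
  have hz : ∀ i ∈ Finset.range (n - k),
      s.esymm (k + 1 + i) * ((-t) ^ (n - (k + 1 + i) - (n - k)) *
        ((n - (k + 1 + i)).choose (n - k) : R)) = 0 := by
    intro i hi
    rw [Finset.mem_range] at hi
    rw [Nat.choose_eq_zero_of_lt (by omega)]
    simp
  rw [Finset.sum_congr rfl hz, Finset.sum_const_zero, add_zero,
    ← Finset.sum_range_reflect]
  apply Finset.sum_congr rfl
  intro j hj
  rw [Finset.mem_range] at hj
  have h0 : k + 1 - 1 - j = k - j := by omega
  have h1 : n - (k - j) = n - k + j := by omega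
  have h2 : n - k + j - (n - k) = j := by omega
  have h3 : (n - k + j).choose (n - k) = (n - k + j).choose j := by
    rw [← Nat.choose_symm (by omega : n - k ≤ n - k + j), h2]
  rw [h0, h1, h2, h3]
  ring


/-- Let `R` be a commutative `ℚ`-algebra, `l ∣ n` (`l > 0`), and `x, a ∈ R`.
For `1 ≤ k ≤ n` define `c^{l,a}_k = σ_k (r 1 - a/l, …, r n - a/l)` for elements
`r 1, …, r n ∈ R` (the fractional Chern classes with trivialization `a`).  Setting
`b = a + x`, the classes satisfy the change-of-trivialization formula
`c^{l,b}_k = ∑_{i=0}^{k} (-1/l)^i (n-k+i choose i) x^i c^{l,a}_{k-i}`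
(note `c^{l,a}_0 = σ_0 = 1`). -/
theorem stmt_3 {R : Type*} [CommRing R] [Algebra ℚ R] (l n : ℕ) (hl : 0 < l)
    (hln : l ∣ n) (r : Fin n → R) (a x : R) (k : ℕ) (hk : 1 ≤ k) (hkn : k ≤ n) :
    (Finset.univ.val.map (fun i => r i - algebraMap ℚ R (1 / l) * (a + x))).esymm k
      = ∑ i ∈ Finset.range (k + 1),
          algebraMap ℚ R ((-1 / l) ^ i * ((n - k + i).choose i : ℚ)) * x ^ i
            * (Finset.univ.val.map (fun j => r j - algebraMap ℚ R (1 / l) * a)).esymm (k - i) := by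
  set c : R := algebraMap ℚ R (1 / l) with hc
  set s : Multiset R := Finset.univ.val.map (fun j => r j - c * a) with hsdef
  have hs : Multiset.card s = n := by simp [hsdef]
  have hmap : (Finset.univ.val.map (fun i : Fin n => r i - c * (a + x)))
      = s.map (fun y => y - c * x) := by
    rw [hsdef, Multiset.map_map]
    apply Multiset.map_congr rfl
    intro y _
    simp only [Function.comp_apply]
    ring
  rw [hmap, esymm_shift s n hs (c * x) k hkn]
  apply Finset.sum_congr rfl
  intro i _
  have : algebraMap ℚ R ((-1 / l : ℚ) ^ i * ((n - k + i).choose i : ℚ))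
      = (-c) ^ i * ((n - k + i).choose i : R) := by
    rw [map_mul, map_pow, map_natCast]
    congr 2
    rw [hc, ← map_neg]
    congr 1
    ring
  rw [this]
  ring
end

section
/- Let $R$ be a commutative $\mathbb{Q}$-algebra, $l \mid n$ with $s = n/l$, and $g, \bar{c}_1, c_2, \ldots, c_n \in R$. Define $\phi^*_k = \sum_{i=0}^{k} (-1/l)^i \binom{n-k+i}{i} g^i c_{k-i}$ with $c_0 = 1$ and $c_1 = s\bar{c}_1$. After substituting $g = \bar{c}_1$, one has $\phi^*_k = \sum_{i=0}^{k-2} (-1/l)^i \binom{n-k+i}{i} \bar{c}_1^i c_{k-i} + (-1/l)^k (1-k)\binom{n}{k} \bar{c}_1^k$. -/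
/-- Let `R` be a commutative `ℚ`-algebra, `n = l * s` with `l > 0`, and
`g, c̄₁, c₂, …, c_n ∈ R`.  Define `φ*_k = ∑_{i=0}^{k} (-1/l)^i (n-k+i choose i) g^i c_{k-i}`
with `c 0 = 1` and `c 1 = s c̄₁`.  After substituting `g = c̄₁`, one has
`φ*_k = ∑_{i=0}^{k-2} (-1/l)^i (n-k+i choose i) c̄₁^i c_{k-i}
          + (-1/l)^k (1-k) (n choose k) c̄₁^k`
(the range `Finset.range (k-1)` is `{0, …, k-2}`). -/
theorem stmt_5 {R : Type*} [CommRing R] [Algebra ℚ R] (l s n : ℕ) (hl : 0 < l)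
    (hn : n = l * s) (cbar₁ : R) (c : ℕ → R) (hc0 : c 0 = 1) (hc1 : c 1 = (s : R) * cbar₁)
    (k : ℕ) (hk : 2 ≤ k) (hkn : k ≤ n) :
    ∑ i ∈ Finset.range (k + 1),
        algebraMap ℚ R ((-1 / l) ^ i * ((n - k + i).choose i : ℚ)) * cbar₁ ^ i * c (k - i)
      = (∑ i ∈ Finset.range (k - 1),
            algebraMap ℚ R ((-1 / l) ^ i * ((n - k + i).choose i : ℚ)) * cbar₁ ^ i * c (k - i))
        + algebraMap ℚ R ((-1 / l) ^ k * (1 - (k : ℚ)) * (n.choose k : ℚ)) * cbar₁ ^ k := by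
  obtain ⟨m, rfl⟩ : ∃ m, k = m + 2 := ⟨k - 2, by omega⟩
  rw [show m + 2 + 1 = (m + 1) + 1 + 1 from rfl, Finset.sum_range_succ, Finset.sum_range_succ,
    show m + 2 - (m + 1 + 1) = 0 from by omega, show m + 2 - (m + 1) = 1 from by omega,
    show m + 2 - 1 = m + 1 from by omega,
    show n - (m + 2) + (m + 1) = n - 1 from by omega,
    show n - (m + 2) + (m + 1 + 1) = n from by omega, hc0, hc1]
  rw [add_assoc]
  congr 1
  have hcast : (s : R) = algebraMap ℚ R (s : ℚ) := by simp
  rw [hcast]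
  have hb : (n : ℚ) * ((n - 1).choose (m + 1) : ℚ)
      = (n.choose (m + 1 + 1) : ℚ) * ((m : ℚ) + 2) := by
    have := Nat.add_one_mul_choose_eq (n - 1) (m + 1)
    rw [show n - 1 + 1 = n from by omega] at this
    have := congrArg (Nat.cast : ℕ → ℚ) this
    push_cast at this
    linarith [this]
  have hls : (l : ℚ) * s = n := by exact_mod_cast hn.symm
  have hl0 : (l : ℚ) ≠ 0 := by positivity
  have hx : (-1 / (l : ℚ)) * l = -1 := by field_simp
  set x : ℚ := -1 / (l : ℚ) with hxdef
  have key : x ^ (m + 1) * ((n - 1).choose (m + 1) : ℚ) * (s : ℚ)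
      + x ^ (m + 1 + 1) * (n.choose (m + 1 + 1) : ℚ)
      = x ^ (m + 2) * (1 - ((m + 2 : ℕ) : ℚ)) * (n.choose (m + 2) : ℚ) := by
    push_cast
    linear_combination (x ^ (m + 1) * ((n - 1).choose (m + 1) : ℚ) * (s : ℚ)) * hx
      - (x ^ (m + 2) * ((n - 1).choose (m + 1) : ℚ)) * hls - x ^ (m + 2) * hb
  have hR := congrArg (algebraMap ℚ R) key
  simp only [map_add, map_mul] at hR
  simp only [map_mul]
  linear_combination cbar₁ ^ (m + 2) * hR
end

section
/- The map $(d_l, \rho_s): U(n)_l \to U(1) \times U(n)$ together with $\mu_s: U(1)\times U(n) \to U(1)$, $\mu_s(z, A) = z^{-s}\det(A)$, forms an exact sequence of groups $1 \to U(n)_l \xrightarrow{(d_l,\rho_s)} U(1)\times U(n) \xrightarrow{\mu_s} U(1) \to 1$; equivalently, $U(n)_l$ is the pullback of $\tau_s: U(1)\to U(1)$, $z \mapsto z^s$, along $\det: U(n) \to U(1)$. -/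
open Matrix CategoryTheory

noncomputable section

universe u

/-- `SU n` : the special unitary group `SU(n)`, as a subgroup of the unitary group
`U(n) = Matrix.unitaryGroup (Fin n) ℂ`. -/
def SU (n : ℕ) : Subgroup (Matrix.unitaryGroup (Fin n) ℂ) where
  carrier := {A | ((A : Matrix.unitaryGroup (Fin n) ℂ) : Matrix (Fin n) (Fin n) ℂ).det = 1}
  one_mem' := by simp
  mul_mem' := by
    intro A B hA hB
    simp only [Set.mem_setOf_eq] at *
    rw [Matrix.UnitaryGroup.mul_val, Matrix.det_mul, hA, hB, one_mul]
  inv_mem' := by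
    intro A hA
    simp only [Set.mem_setOf_eq] at *
    rw [Matrix.UnitaryGroup.inv_val, Matrix.star_eq_conjTranspose, Matrix.det_conjTranspose, hA]
    simp

/-- The diagonal central `ℤ/l` in `U(1) × SU(n)`: the subgroup generated by the pairs
`(ζ, ζ⁻¹ · 1)` with `ζ` an `l`-th root of unity. -/
def diagZ (l n : ℕ) : Subgroup (Circle × SU n) :=
  Subgroup.closure
    {p | (p.1 : ℂ) ^ l = 1 ∧
      ((p.2 : Matrix.unitaryGroup (Fin n) ℂ) : Matrix (Fin n) (Fin n) ℂ)
        = ((p.1 : ℂ))⁻¹ • (1 : Matrix (Fin n) (Fin n) ℂ)}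

/-- The diagonal `ℤ/l` is central, hence normal. -/
instance diagZ_normal (l n : ℕ) : (diagZ l n).Normal := by
  have hle : diagZ l n ≤ Subgroup.center (Circle × SU n) := by
    rw [diagZ, Subgroup.closure_le]
    rintro ⟨z, A⟩ ⟨hz, hA⟩
    rw [SetLike.mem_coe, Subgroup.mem_center_iff]
    rintro ⟨w, B⟩
    have h1 : w * z = z * w := mul_comm _ _
    have h2 : B * A = A * B := by
      apply Subtype.ext
      apply Subtype.ext
      show ((B : Matrix.unitaryGroup (Fin n) ℂ) : Matrix (Fin n) (Fin n) ℂ) *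
          ((A : Matrix.unitaryGroup (Fin n) ℂ) : Matrix (Fin n) (Fin n) ℂ)
        = ((A : Matrix.unitaryGroup (Fin n) ℂ) : Matrix (Fin n) (Fin n) ℂ) *
          ((B : Matrix.unitaryGroup (Fin n) ℂ) : Matrix (Fin n) (Fin n) ℂ)
      rw [hA, Matrix.smul_mul, Matrix.mul_smul, Matrix.one_mul, Matrix.mul_one]
    exact Prod.ext h1 h2
  constructor
  intro p hp g
  have hc := Subgroup.mem_center_iff.mp (hle hp) g
  have : g * p * g⁻¹ = p := by
    rw [hc, mul_assoc, mul_inv_cancel, mul_one]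
  rwa [this]

/-- `Unl l n` : the group `U(n)_l = U(1) ×_{ℤ/l} SU(n)`, the quotient of `U(1) × SU(n)`
by the diagonal central `ℤ/l`. -/
def Unl (l n : ℕ) : Type :=
  (Circle × SU n) ⧸ diagZ l n

instance (l n : ℕ) : Group (Unl l n) := QuotientGroup.Quotient.group _

instance (l n : ℕ) : TopologicalSpace (Unl l n) := instTopologicalSpaceQuotient


lemma Circle.coe_pow' (z : Circle) (k : ℕ) : ((z ^ k : Circle) : ℂ) = (z : ℂ) ^ k := by
  induction k with
  | zero => simp
  | succ k ih => rw [pow_succ, pow_succ, Circle.coe_mul, ih]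

/-- Every element of the circle has a `k`-th root for `k > 0`. -/
lemma circle_pow_surjective (k : ℕ) (hk : 0 < k) (u : Circle) : ∃ w : Circle, w ^ k = u := by
  refine ⟨Circle.exp (Complex.arg u / k), ?_⟩
  have hcoe : ((Circle.exp (Complex.arg u / k) ^ k : Circle) : ℂ) = (u : ℂ) := by
    rw [Circle.coe_pow', Circle.coe_exp, ← Complex.exp_nat_mul]
    have h1 : (k : ℂ) * (↑(Complex.arg (u : ℂ) / (k : ℝ)) * Complex.I)
        = (Complex.arg (u : ℂ)) * Complex.I := by
      have hk' : (k : ℂ) ≠ 0 := by exact_mod_cast hk.ne'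
      push_cast
      field_simp
    rw [h1]
    conv_rhs => rw [← Complex.norm_mul_exp_arg_mul_I (u : ℂ)]
    simp only [Circle.norm_coe, Complex.ofReal_one, one_mul]
  exact Subtype.ext hcoe

/-- With `n = l s` and `U(n)_l = U(1) ×_{ℤ/l} SU(n)`, the map
`(d_l, ρ_s) : U(n)_l → U(1) × U(n)` together with `μ_s : U(1) × U(n) → U(1)`,
`μ_s(z, A) = z^{-s} det A`, forms an exact sequence of groups
`1 → U(n)_l → U(1) × U(n) → U(1) → 1`; equivalently, `U(n)_l` is the pullback of
`τ_s : U(1) → U(1)`, `z ↦ z^s`, along `det : U(n) → U(1)` (its image in `U(1) × U(n)`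
consists exactly of the pairs `(z, A)` with `det A = z^s`). -/
theorem stmt_16 (l s n : ℕ) (hl : 0 < l) (hs : 0 < s) (hn : n = l * s)
    (φ : Unl l n →* Circle × Matrix.unitaryGroup (Fin n) ℂ)
    -- `φ = (d_l, ρ_s)` : on a class `[z, A]`, the first component is `z^l` …
    (hφ₁ : ∀ p : Circle × SU n, (φ (QuotientGroup.mk p)).1 = p.1 ^ l)
    -- … and the second component is the unitary matrix `z • A`.
    (hφ₂ : ∀ p : Circle × SU n,
      (((φ (QuotientGroup.mk p)).2 : Matrix.unitaryGroup (Fin n) ℂ)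
          : Matrix (Fin n) (Fin n) ℂ)
        = ((p.1 : ℂ)) • ((p.2 : Matrix.unitaryGroup (Fin n) ℂ)
          : Matrix (Fin n) (Fin n) ℂ))
    (μs : Circle × Matrix.unitaryGroup (Fin n) ℂ →* Circle)
    -- `μ_s (z, A) = z^{-s} · det A`
    (hμ : ∀ q : Circle × Matrix.unitaryGroup (Fin n) ℂ,
      ((μs q : ℂ)) = ((q.1 : ℂ))⁻¹ ^ s * ((q.2 : Matrix (Fin n) (Fin n) ℂ)).det) :
    -- exactness of `1 → U(n)_l → U(1) × U(n) → U(1) → 1`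
    Function.Injective φ
      ∧ φ.range = μs.ker
      ∧ Function.Surjective μs
      -- the pullback description of the image
      ∧ (∀ q : Circle × Matrix.unitaryGroup (Fin n) ℂ,
          q ∈ φ.range ↔ ((q.2 : Matrix (Fin n) (Fin n) ℂ)).det = ((q.1 : ℂ)) ^ s) := by
  have hcard : Fintype.card (Fin n) = l * s := by rw [Fintype.card_fin, hn]
  have hdet1 : ∀ B : SU n,
      ((B : Matrix.unitaryGroup (Fin n) ℂ) : Matrix (Fin n) (Fin n) ℂ).det = 1 :=
    fun B => B.2
  -- The key pullback characterization of the range of φ.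
  have hkey : ∀ q : Circle × Matrix.unitaryGroup (Fin n) ℂ,
      q ∈ φ.range ↔ ((q.2 : Matrix (Fin n) (Fin n) ℂ)).det = ((q.1 : ℂ)) ^ s := by
    intro q
    constructor
    · rintro ⟨x, rfl⟩
      obtain ⟨p, rfl⟩ := QuotientGroup.mk_surjective x
      rw [hφ₂ p, Matrix.det_smul, hdet1 p.2, mul_one]
      have h1 : ((φ (QuotientGroup.mk p)).1 : ℂ) = ((p.1 : ℂ)) ^ l := by
        rw [hφ₁ p, Circle.coe_pow']
      rw [h1, hcard, pow_mul]
    · intro hq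
      obtain ⟨w, hw⟩ := circle_pow_surjective l hl q.1
      have hwC : ((w : ℂ)) ^ l = (q.1 : ℂ) := by rw [← hw, Circle.coe_pow']
      have hwne : (w : ℂ) ≠ 0 := w.coe_ne_zero
      set M : Matrix (Fin n) (Fin n) ℂ := ((w : ℂ))⁻¹ • (q.2 : Matrix (Fin n) (Fin n) ℂ)
        with hM
      have hq2 : (q.2 : Matrix (Fin n) (Fin n) ℂ) * star (q.2 : Matrix (Fin n) (Fin n) ℂ)
          = 1 := Matrix.mem_unitaryGroup_iff.mp q.2.2
      have hMu : M ∈ Matrix.unitaryGroup (Fin n) ℂ := by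
        rw [Matrix.mem_unitaryGroup_iff]
        have hstar : star M
            = (starRingEnd ℂ ((w : ℂ))⁻¹) • star (q.2 : Matrix (Fin n) (Fin n) ℂ) := by
          rw [hM, star_smul]; rfl
        rw [hstar, Matrix.smul_mul, Matrix.mul_smul, smul_smul, hq2]
        have hconj : starRingEnd ℂ ((w : ℂ))⁻¹ = (w : ℂ) := by
          rw [map_inv₀, ← Circle.coe_inv_eq_conj, Circle.coe_inv, inv_inv]
        rw [hconj, inv_mul_cancel₀ hwne, one_smul]
      have hMdet : M.det = 1 := by
        rw [hM, Matrix.det_smul, hq, hcard, ← hwC, ← pow_mul, inv_pow,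
          inv_mul_cancel₀ (pow_ne_zero _ hwne)]
      refine ⟨QuotientGroup.mk (w, (⟨⟨M, hMu⟩, hMdet⟩ : SU n)), ?_⟩
      have h1 : (φ (QuotientGroup.mk (w, (⟨⟨M, hMu⟩, hMdet⟩ : SU n)))).1 = q.1 := by
        rw [hφ₁]; exact hw
      have h2 : (φ (QuotientGroup.mk (w, (⟨⟨M, hMu⟩, hMdet⟩ : SU n)))).2 = q.2 := by
        apply Subtype.ext
        rw [hφ₂]
        show (w : ℂ) • M = (q.2 : Matrix (Fin n) (Fin n) ℂ)
        rw [hM, smul_smul, mul_inv_cancel₀ hwne, one_smul]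
      exact Prod.ext h1 h2
  refine ⟨?_, ?_, ?_, hkey⟩
  · -- injectivity
    rw [injective_iff_map_eq_one]
    intro a ha
    obtain ⟨p, rfl⟩ := QuotientGroup.mk_surjective a
    have h1 : (φ (QuotientGroup.mk p)).1 = 1 := by rw [ha]; rfl
    have h2 : (φ (QuotientGroup.mk p)).2 = 1 := by rw [ha]; rfl
    rw [hφ₁ p] at h1
    have hz : ((p.1 : ℂ)) ^ l = 1 := by
      have := congrArg (fun z : Circle => (z : ℂ)) h1
      simpa [Circle.coe_pow'] using this
    have hA0 : ((p.1 : ℂ)) • ((p.2 : Matrix.unitaryGroup (Fin n) ℂ)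
        : Matrix (Fin n) (Fin n) ℂ) = (1 : Matrix (Fin n) (Fin n) ℂ) := by
      rw [← hφ₂ p, h2]; rfl
    have hA : ((p.2 : Matrix.unitaryGroup (Fin n) ℂ) : Matrix (Fin n) (Fin n) ℂ)
        = ((p.1 : ℂ))⁻¹ • (1 : Matrix (Fin n) (Fin n) ℂ) := by
      rw [← hA0, smul_smul, inv_mul_cancel₀ p.1.coe_ne_zero, one_smul]
    have hmem : p ∈ diagZ l n := Subgroup.subset_closure ⟨hz, hA⟩
    exact (QuotientGroup.eq_one_iff p).mpr hmem
  · -- range = ker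
    ext q
    rw [hkey q, MonoidHom.mem_ker, ← Circle.coe_eq_one, hμ q, inv_pow,
      inv_mul_eq_one₀ (pow_ne_zero _ q.1.coe_ne_zero)]
    exact eq_comm
  · -- surjectivity of μs
    intro u
    obtain ⟨w, hw⟩ := circle_pow_surjective s hs u⁻¹
    refine ⟨(w, 1), ?_⟩
    have : ((μs (w, 1) : ℂ)) = (u : ℂ) := by
      rw [hμ (w, 1)]
      have hdet : (((1 : Matrix.unitaryGroup (Fin n) ℂ)
          : Matrix (Fin n) (Fin n) ℂ)).det = 1 := by simp
      have hwC2 : ((w : ℂ)) ^ s = ((u : ℂ))⁻¹ := by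
        rw [← Circle.coe_inv, ← hw, Circle.coe_pow']
      rw [hdet, mul_one, inv_pow, hwC2, inv_inv]
    exact Subtype.ext this


end
end
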